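/- (Per-step regret inequality under relative smoothness) Let φ_t be convex and differentiable on a convex set K, and suppose the relative smoothness property φ_t(b) ≤ φ_t(b') + ⟨∇φ_t(b'), b − b'⟩ + D_h(b, b') holds for all b, b' ∈ K. If b_t minimizes b ↦ ⟨∇φ_t(b_{t−1}), b − b_{t−1}⟩ + D_h(b, b_{t−1}) over K, then for any b* ∈ K: φ_t(b_t) − φ_t(b*) ≤ D_h(b*, b_{t−1}) − D_h(b*, b_t). -/

import Mathlib

open Finset

abbrev E (n : ℕ) := EuclideanSpace ℝ (Fin n)

/-- Per-step regret inequality under relative smoothness. -/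
theorem stmt_7 (n : ℕ) (K : Set (E n)) (hK : Convex ℝ K)
    (h : E n → ℝ) (gh : E n → E n) (hgrad : ∀ x, HasGradientAt h (gh x) x)
    (D : E n → E n → ℝ) (hD : ∀ x y, D x y = h x - h y - (inner ℝ (gh y) (x - y) : ℝ))
    (φ : E n → ℝ) (gφ : E n → E n)
    (hφconv : ∀ b ∈ K, ∀ b' ∈ K, φ b' + (inner ℝ (gφ b') (b - b') : ℝ) ≤ φ b)
    (hrel : ∀ b ∈ K, ∀ b' ∈ K, φ b ≤ φ b' + (inner ℝ (gφ b') (b - b') : ℝ) + D b b')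
    (bprev bt bstar : E n) (hbprev : bprev ∈ K) (hbt : bt ∈ K) (hbstar : bstar ∈ K)
    (hmin : ∀ b ∈ K, (inner ℝ (gφ bprev) (bt - bprev) : ℝ) + D bt bprev ≤
      (inner ℝ (gφ bprev) (b - bprev) : ℝ) + D b bprev) :
    φ bt - φ bstar ≤ D bstar bprev - D bstar bt := by
  set g := gφ bprev with hg
  set c := g - gh bprev with hc
  -- the mirror descent objective
  set ψ : E n → ℝ := fun b => (inner ℝ g (b - bprev) : ℝ) + D b bprev with hψ
  have hψeq : ∀ b, ψ b = (inner ℝ c b : ℝ) - (inner ℝ c bprev : ℝ) + (h b - h bprev) := by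
    intro b
    simp only [hψ, hD, hc, inner_sub_left, inner_sub_right]
    ring
  -- derivative of ψ at bt
  have hF : HasFDerivAt ψ (innerSL ℝ c + InnerProductSpace.toDual ℝ (E n) (gh bt)) bt := by
    have h1 : HasFDerivAt (fun b : E n => (inner ℝ c b : ℝ)) (innerSL ℝ c) bt :=
      (innerSL ℝ c).hasFDerivAt
    have h2 : HasFDerivAt h (InnerProductSpace.toDual ℝ (E n) (gh bt)) bt :=
      hasGradientAt_iff_hasFDerivAt.mp (hgrad bt)
    have := ((h1.sub_const (inner ℝ c bprev : ℝ)).add (h2.sub_const (h bprev)))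
    refine this.congr_of_eventuallyEq (Filter.Eventually.of_forall fun b => ?_)
    rw [hψeq b]; rfl
  -- bt is a local min of ψ on K
  have hminOn : IsLocalMinOn ψ K bt := by
    apply IsMinOn.localize
    intro b hb
    exact hmin b hb
  -- variational inequality
  have hcone : bstar - bt ∈ posTangentConeAt K bt :=
    sub_mem_posTangentConeAt_of_segment_subset (hK.segment_subset hbt hbstar)
  have hVI : (0 : ℝ) ≤ (inner ℝ c (bstar - bt) : ℝ) + (inner ℝ (gh bt) (bstar - bt) : ℝ) := by
    have := hminOn.hasFDerivWithinAt_nonneg hF.hasFDerivWithinAt hcone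
    simpa [InnerProductSpace.toDual_apply_apply] using this
  -- combine
  have hrel1 : φ bt ≤ φ bprev + (inner ℝ g (bt - bprev) : ℝ) + D bt bprev :=
    hrel bt hbt bprev hbprev
  have hconv1 : φ bprev + (inner ℝ g (bstar - bprev) : ℝ) ≤ φ bstar :=
    hφconv bstar hbstar bprev hbprev
  have key : (inner ℝ g (bt - bprev) : ℝ) - (inner ℝ g (bstar - bprev) : ℝ) + D bt bprev ≤
      D bstar bprev - D bstar bt := by
    have expand : D bstar bprev - D bstar bt - D bt bprev =
        (inner ℝ (gh bt) (bstar - bt) : ℝ) - (inner ℝ (gh bprev) (bstar - bt) : ℝ) := by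
      simp only [hD, inner_sub_right]
      ring
    have hg1 : (inner ℝ g (bt - bprev) : ℝ) - (inner ℝ g (bstar - bprev) : ℝ) =
        -(inner ℝ g (bstar - bt) : ℝ) := by
      simp only [inner_sub_right]; ring
    have hc1 : (inner ℝ c (bstar - bt) : ℝ) =
        (inner ℝ g (bstar - bt) : ℝ) - (inner ℝ (gh bprev) (bstar - bt) : ℝ) := by
      simp [hc, inner_sub_left]
    nlinarith [hVI]
  linarith [hrel1, hconv1, key]
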